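/- arXiv:2401.13356 — 2 statements merged into one kernel-verified Lean document; each statement's English description precedes it below -/
import Mathlib

section
/- The orbits of the blocks {0,1,5}, {0,2,10}, {0,3,9}, {0,7,14} under the map i ↦ i+1 on ℤ₂₁ form a Steiner triple system of order 21. -/
def cyclicBlockC3 (b : Finset (ZMod 21)) : Prop :=
  ∃ t : ZMod 21,
    b = {t, t + 1, t + 5} ∨ b = {t, t + 2, t + 10} ∨
    b = {t, t + 3, t + 9} ∨ b = {t, t + 7, t + 14}

def blk (t : ZMod 21) : Fin 4 → Finset (ZMod 21)
  | 0 => {t, t + 1, t + 5}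
  | 1 => {t, t + 2, t + 10}
  | 2 => {t, t + 3, t + 9}
  | 3 => {t, t + 7, t + 14}

lemma cyclic_iff (b : Finset (ZMod 21)) : cyclicBlockC3 b ↔ ∃ t k, b = blk t k := by
  constructor
  · rintro ⟨t, h | h | h | h⟩
    exacts [⟨t, 0, h⟩, ⟨t, 1, h⟩, ⟨t, 2, h⟩, ⟨t, 3, h⟩]
  · rintro ⟨t, k, rfl⟩
    fin_cases k
    exacts [⟨t, Or.inl rfl⟩, ⟨t, Or.inr (Or.inl rfl)⟩,
      ⟨t, Or.inr (Or.inr (Or.inl rfl))⟩, ⟨t, Or.inr (Or.inr (Or.inr rfl))⟩]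

lemma blk_card : ∀ (t : ZMod 21) (k : Fin 4), (blk t k).card = 3 := by decide

lemma blk_add (t s : ZMod 21) (k : Fin 4) :
    blk (t + s) k = (blk t k).image (· + s) := by
  fin_cases k <;>
    simp [blk, Finset.image_insert, Finset.image_singleton, add_right_comm]

lemma mem_blk_add (p t s : ZMod 21) (k : Fin 4) :
    p ∈ blk t k ↔ p + s ∈ blk (t + s) k := by
  rw [blk_add]
  constructor
  · intro h; exact Finset.mem_image.2 ⟨p, h, rfl⟩
  · intro h
    obtain ⟨a, ha, e⟩ := Finset.mem_image.1 h
    rwa [add_left_injective s e] at ha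

lemma blk_ex0 : ∀ d : ZMod 21, d ≠ 0 → ∃ t k, 0 ∈ blk t k ∧ d ∈ blk t k := by decide

set_option maxHeartbeats 4000000 in
lemma blk_uniq0 : ∀ d : ZMod 21, d ≠ 0 → ∀ t k t' k',
    (0 : ZMod 21) ∈ blk t k → d ∈ blk t k → (0 : ZMod 21) ∈ blk t' k' → d ∈ blk t' k' →
    blk t k = blk t' k' := by decide

/-- The orbits of {0,1,5}, {0,2,10}, {0,3,9}, {0,7,14} under `i ↦ i+1` on ℤ₂₁
form a Steiner triple system of order 21. -/
theorem stmt_3 :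
    (Finset.univ : Finset (ZMod 21)).card = 21 ∧
    (∀ b : Finset (ZMod 21), cyclicBlockC3 b → b.card = 3) ∧
    (∀ p q : ZMod 21, p ≠ q →
      ∃! b : Finset (ZMod 21), cyclicBlockC3 b ∧ p ∈ b ∧ q ∈ b) := by
  refine ⟨by decide, ?_, ?_⟩
  · intro b hb
    obtain ⟨t, k, rfl⟩ := (cyclic_iff b).1 hb
    exact blk_card t k
  · intro p q hpq
    have hd : q - p ≠ 0 := sub_ne_zero.2 (Ne.symm hpq)
    obtain ⟨t, k, h0, hdm⟩ := blk_ex0 (q - p) hd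
    have hp : p ∈ blk (t + p) k := by
      have := (mem_blk_add 0 t p k).1 h0; rwa [zero_add] at this
    have hq : q ∈ blk (t + p) k := by
      have := (mem_blk_add (q - p) t p k).1 hdm; rwa [sub_add_cancel] at this
    refine ⟨blk (t + p) k, ⟨(cyclic_iff _).2 ⟨t + p, k, rfl⟩, hp, hq⟩, ?_⟩
    rintro b ⟨hb, hpb, hqb⟩
    obtain ⟨t', k', rfl⟩ := (cyclic_iff b).1 hb
    have h0' : (0 : ZMod 21) ∈ blk (t' + -p) k' := by
      have := (mem_blk_add p t' (-p) k').1 hpb; rwa [add_neg_cancel] at this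
    have hd' : q - p ∈ blk (t' + -p) k' := by
      rw [sub_eq_add_neg]; exact (mem_blk_add q t' (-p) k').1 hqb
    have key := blk_uniq0 (q - p) hd (t' + -p) k' t k h0' hd' h0 hdm
    have := congrArg (fun b => Finset.image (· + p) b) key
    simp only [← blk_add] at this
    rwa [neg_add_cancel_right] at this
end

section
/- The unique STS(9), namely the affine plane AG(2,3) viewed as a triple system on ℤ₃ × ℤ₃ whose blocks are the 12 lines, contains no prism configuration. -/
/-- A line of the affine plane AG(2,3) over ℤ₃. -/
def agLine (b : Finset (ZMod 3 × ZMod 3)) : Prop :=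
  ∃ p d : ZMod 3 × ZMod 3, d ≠ 0 ∧ b = {p, p + d, p + d + d}

lemma three_mul_zero (d : ZMod 3 × ZMod 3) : d + d + d = 0 := by
  have : ∀ s : ZMod 3, s + s + s = 0 := by decide
  exact Prod.ext (this d.1) (this d.2)

lemma two_ne (d : ZMod 3 × ZMod 3) (hd : d ≠ 0) : d + d ≠ 0 := by
  intro h
  apply hd
  have h3 := three_mul_zero d
  have : d = (d + d + d) - (d + d) := by ring
  rw [h3, h] at this
  simpa using this

lemma card_le_two {α} [DecidableEq α] (u v : α) : ({u, v} : Finset α).card ≤ 2 :=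
  (Finset.card_insert_le _ _).trans (by simp)

lemma line_card {p d : ZMod 3 × ZMod 3} (hd : d ≠ 0) :
    ({p, p + d, p + d + d} : Finset (ZMod 3 × ZMod 3)).card = 3 := by
  rw [Finset.card_insert_of_notMem, Finset.card_insert_of_notMem, Finset.card_singleton]
  · simp [left_eq_add, hd]
  · simp [add_assoc, left_eq_add, hd, two_ne d hd]

lemma agLine_sum {u v w : ZMod 3 × ZMod 3} (h : agLine {u, v, w}) : u + v + w = 0 := by
  obtain ⟨p, d, hd, hb⟩ := h
  have hc : ({u, v, w} : Finset _).card = 3 := by rw [hb]; exact line_card hd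
  have huv : u ≠ v := by
    rintro rfl
    rw [Finset.insert_idem] at hc
    have := card_le_two u w
    omega
  have huw : u ≠ w := by
    rintro rfl
    have hsub : ({u, v, u} : Finset _) ⊆ {u, v} := by intro t ht; simp at ht ⊢; tauto
    have := (Finset.card_le_card hsub).trans (card_le_two u v)
    omega
  have hvw : v ≠ w := by
    rintro rfl
    have hsub : ({u, v, v} : Finset _) ⊆ {u, v} := by intro t ht; simp at ht ⊢; tauto
    have := (Finset.card_le_card hsub).trans (card_le_two u v)
    omega
  have hsum := congrArg (fun s : Finset (ZMod 3 × ZMod 3) => ∑ t ∈ s, t) hb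
  have hd1 : p ≠ p + d := by simp [left_eq_add, hd]
  have hd2 : p ≠ p + d + d := by rw [add_assoc]; simp [left_eq_add, two_ne d hd]
  have hd3 : p + d ≠ p + d + d := by simp [left_eq_add, hd]
  rw [Finset.sum_insert (by simp [huv, huw]), Finset.sum_insert (by simp [hvw]),
      Finset.sum_singleton, Finset.sum_insert (by simp [hd1, hd2]),
      Finset.sum_insert (by simp [hd3]), Finset.sum_singleton] at hsum
  linear_combination hsum + three_mul_zero p + three_mul_zero d

lemma card_le_eight {α} [DecidableEq α] (p1 p2 p3 p4 p5 p6 p7 p8 : α) :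
    ({p1, p2, p3, p4, p5, p6, p7, p8} : Finset α).card ≤ 8 := by
  have h1 := Finset.card_insert_le p1 ({p2, p3, p4, p5, p6, p7, p8} : Finset α)
  have h2 := Finset.card_insert_le p2 ({p3, p4, p5, p6, p7, p8} : Finset α)
  have h3 := Finset.card_insert_le p3 ({p4, p5, p6, p7, p8} : Finset α)
  have h4 := Finset.card_insert_le p4 ({p5, p6, p7, p8} : Finset α)
  have h5 := Finset.card_insert_le p5 ({p6, p7, p8} : Finset α)
  have h6 := Finset.card_insert_le p6 ({p7, p8} : Finset α)
  have h7 := Finset.card_insert_le p7 ({p8} : Finset α)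
  have h8 : ({p8} : Finset α).card = 1 := Finset.card_singleton _
  omega

/-- The unique STS(9), the affine plane AG(2,3), contains no prism configuration. -/
theorem stmt_17 :
    ¬ ∃ a b c l m n x y z : ZMod 3 × ZMod 3,
      ({a, b, c, l, m, n, x, y, z} : Finset (ZMod 3 × ZMod 3)).card = 9 ∧
      agLine {a, b, n} ∧ agLine {a, c, m} ∧ agLine {b, c, l} ∧
      agLine {l, y, z} ∧ agLine {m, x, z} ∧ agLine {n, x, y} := by
  rintro ⟨a, b, c, l, m, n, x, y, z, hcard, h1, h2, h3, h4, h5, h6⟩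
  have e1 := agLine_sum h1
  have e2 := agLine_sum h2
  have e3 := agLine_sum h3
  have e4 := agLine_sum h4
  have e5 := agLine_sum h5
  have e6 := agLine_sum h6
  have hcz : c ≠ z := by
    rintro rfl
    have hsub : ({a, b, c, l, m, n, x, y, c} : Finset (ZMod 3 × ZMod 3)) ⊆
        {a, b, c, l, m, n, x, y} := by simp [Finset.insert_subset_iff]
    have := (Finset.card_le_card hsub).trans (card_le_eight a b c l m n x y)
    omega
  exact hcz (by linear_combination (e4 - e3 + e5 - e2 - e6 + e1) - three_mul_zero (z - c))
end
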